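/- Soundness of axiom G: if E ⊑ ∂(F) then E + F ≈_b F, and hence α.(∂(E+F) ⊕_r Q) ≈_rb α.(∂(F) ⊕_r Q). -/

import Mathlib

open scoped BigOperators
open Classical

namespace PBB

structure Distr (X : Type) where
  f : X → ℝ
  nonneg : ∀ x, 0 ≤ f x
  fin : (Function.support f).Finite
  sum_one : ∑ᶠ x, f x = 1

namespace Distr

variable {X : Type}

noncomputable def dirac (E : X) : Distr X where
  f := fun x => if x = E then 1 else 0
  nonneg := fun x => by by_cases h : x = E <;> simp [h]
  fin := Set.Finite.subset (Set.finite_singleton E) (by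
    intro x hx
    simp only [Function.mem_support] at hx
    by_contra h
    simp only [Set.mem_singleton_iff] at h
    simp [h] at hx)
  sum_one := by
    rw [finsum_eq_single _ E (by intro x hx; simp [hx])]
    simp

noncomputable def mix (r : ℝ) (h0 : 0 ≤ r) (h1 : r ≤ 1) (μ ν : Distr X) : Distr X where
  f := fun x => r * μ.f x + (1 - r) * ν.f x
  nonneg := fun x =>
    add_nonneg (mul_nonneg h0 (μ.nonneg x)) (mul_nonneg (by linarith) (ν.nonneg x))
  fin := Set.Finite.subset (μ.fin.union ν.fin) (by
    intro x hx
    simp only [Function.mem_support] at hx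
    by_contra h
    simp only [Set.mem_union, Function.mem_support, not_or, not_not] at h
    simp [h.1, h.2] at hx)
  sum_one := by
    have hf : (Function.support fun x => r * μ.f x).Finite :=
      Set.Finite.subset μ.fin (by
        intro x hx
        simp only [Function.mem_support] at hx ⊢
        intro h; simp [h] at hx)
    have hg : (Function.support fun x => (1 - r) * ν.f x).Finite :=
      Set.Finite.subset ν.fin (by
        intro x hx
        simp only [Function.mem_support] at hx ⊢
        intro h; simp [h] at hx)
    rw [finsum_add_distrib hf hg, ← mul_finsum _ _, ← mul_finsum _ _,
      μ.sum_one, ν.sum_one]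
    ring

end Distr

def IsMix {X : Type} (r : ℝ) (μ ν ξ : Distr X) : Prop :=
  ∀ x, ξ.f x = r * μ.f x + (1 - r) * ν.f x

def IsCombo {X I : Type} [Fintype I] (p : I → ℝ) (μs : I → Distr X) (ξ : Distr X) : Prop :=
  (∀ i, 0 ≤ p i) ∧ (∑ i, p i = 1) ∧ ∀ x, ξ.f x = ∑ i, p i * (μs i).f x

/-! ### The probabilistic process calculus -/

mutual
/-- Non-deterministic processes: `E ::= 0 | α.P | E + E`. -/
inductive PE (Act : Type) : Type where
  | zero : PE Act
  | pre : Act → PP Act → PE Act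
  | plus : PE Act → PE Act → PE Act

/-- Probabilistic processes: `P ::= ∂(E) | P ⊕_r P` with `r ∈ (0,1)`. -/
inductive PP (Act : Type) : Type where
  | dirac : PE Act → PP Act
  | pchoice : PP Act → (r : ℝ) → 0 < r → r < 1 → PP Act → PP Act
end

variable {Act : Type}

/-- The distribution `⟦P⟧` denoted by a probabilistic process. -/
noncomputable def den : PP Act → Distr (PE Act)
  | .dirac E => Distr.dirac E
  | .pchoice P r h0 h1 Q => Distr.mix r h0.le h1.le (den P) (den Q)

/-- The transition relation `E →α μ` on non-deterministic processes. -/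
inductive pstep : PE Act → Act → Distr (PE Act) → Prop where
  | pre (α : Act) (P : PP Act) : pstep (.pre α P) α (den P)
  | left {E₁ E₂ : PE Act} {α : Act} {μ : Distr (PE Act)} :
      pstep E₁ α μ → pstep (.plus E₁ E₂) α μ
  | right {E₁ E₂ : PE Act} {α : Act} {μ : Distr (PE Act)} :
      pstep E₂ α μ → pstep (.plus E₁ E₂) α μ

/-- The (combined) transition relation `μ →α μ'` on distributions. -/
def dstep (μ : Distr (PE Act)) (α : Act) (μ' : Distr (PE Act)) : Prop :=
  ∃ (I : Type) (_ : Fintype I) (p : I → ℝ) (Es : I → PE Act) (μs : I → Distr (PE Act)),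
    IsCombo p (fun i => Distr.dirac (Es i)) μ ∧ IsCombo p μs μ' ∧
    ∀ i, pstep (Es i) α (μs i)

variable (τ : Act)

/-- The partial silent step `μ →(τ) μ'`. -/
def ptau (μ μ' : Distr (PE Act)) : Prop :=
  dstep μ τ μ' ∨
  ∃ (s : ℝ) (μ₁ μ₂ μ₁' : Distr (PE Act)), 0 ≤ s ∧ s ≤ 1 ∧
    IsMix s μ₁ μ₂ μ ∧ IsMix s μ₁' μ₂ μ' ∧ dstep μ₁ τ μ₁'

/-- `μ ⟹ μ'`: the reflexive-transitive closure of `→(τ)`. -/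
def wtau : Distr (PE Act) → Distr (PE Act) → Prop :=
  Relation.ReflTransGen (ptau τ)

/-- The optional step `μ →(α) μ'`. -/
def optStep (μ : Distr (PE Act)) (α : Act) (μ' : Distr (PE Act)) : Prop :=
  dstep μ α μ' ∨ (α = τ ∧ ptau τ μ μ')

/-- Weak decomposability of a relation on distributions. -/
def WeaklyDecomposable (R : Distr (PE Act) → Distr (PE Act) → Prop) : Prop :=
  ∀ (I : Type) (_ : Fintype I) (p : I → ℝ) (μs : I → Distr (PE Act))
    (μ ν : Distr (PE Act)),
    R μ ν → IsCombo p μs μ →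
    ∃ (ν' : Distr (PE Act)) (νs : I → Distr (PE Act)),
      wtau τ ν ν' ∧ R μ ν' ∧ IsCombo p νs ν' ∧ ∀ i, R (μs i) (νs i)

/-- Decomposability of a relation on distributions. -/
def Decomposable (R : Distr (PE Act) → Distr (PE Act) → Prop) : Prop :=
  ∀ (I : Type) (_ : Fintype I) (p : I → ℝ) (μs : I → Distr (PE Act))
    (μ ν : Distr (PE Act)),
    R μ ν → IsCombo p μs μ →
    ∃ νs : I → Distr (PE Act), IsCombo p νs ν ∧ ∀ i, R (μs i) (νs i)

/-- Branching probabilistic bisimulation relations. -/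
def IsBranchingBisim (R : Distr (PE Act) → Distr (PE Act) → Prop) : Prop :=
  Symmetric R ∧ WeaklyDecomposable τ R ∧
  ∀ μ ν α μ', R μ ν → dstep μ α μ' →
    ∃ ν' ν'', wtau τ ν ν' ∧ optStep τ ν' α ν'' ∧ R μ ν' ∧ R μ' ν''

/-- Branching probabilistic bisimilarity `≈_b`. -/
def bb (μ ν : Distr (PE Act)) : Prop :=
  ∃ R, IsBranchingBisim τ R ∧ R μ ν

/-- Strong probabilistic bisimulation relations. -/
def IsStrongBisim (R : Distr (PE Act) → Distr (PE Act) → Prop) : Prop :=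
  Symmetric R ∧ Decomposable R ∧
  ∀ μ ν α μ', R μ ν → dstep μ α μ' →
    ∃ ν', dstep ν α ν' ∧ R μ' ν'

/-- Strong probabilistic bisimilarity `∼`. -/
def sb (μ ν : Distr (PE Act)) : Prop :=
  ∃ R, IsStrongBisim R ∧ R μ ν

/-- Rooted branching probabilistic bisimulation relations. -/
def IsRootedBranchingBisim (R : Distr (PE Act) → Distr (PE Act) → Prop) : Prop :=
  Symmetric R ∧ Decomposable R ∧
  ∀ μ ν α μ', R μ ν → dstep μ α μ' →
    ∃ ν', dstep ν α ν' ∧ bb τ μ' ν'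

/-- Rooted branching probabilistic bisimilarity `≈_rb`. -/
def rbb (μ ν : Distr (PE Act)) : Prop :=
  ∃ R, IsRootedBranchingBisim τ R ∧ R μ ν

/-- `≈_b`-stability of a distribution. -/
def Stable (μ : Distr (PE Act)) : Prop :=
  ∀ μ', wtau τ μ μ' → bb τ μ μ' → μ' = μ

/-- A state is rigid iff it admits no inert `τ`-transition. -/
def Rigid (E : PE Act) : Prop :=
  ¬ ∃ μ, pstep E τ μ ∧ bb τ (Distr.dirac E) μ

/-- `E ⊑ P`: every transition of `E` is matched by an optional transition of `⟦P⟧`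
with branching probabilistically bisimilar target. -/
def sq (E : PE Act) (P : PP Act) : Prop :=
  ∀ α μ, pstep E α μ → ∃ ν, optStep τ (den P) α ν ∧ bb τ μ ν


/-! ### Auxiliary development -/

namespace Distr

theorem ext' {μ ν : Distr X} (h : ∀ x, μ.f x = ν.f x) : μ = ν := by
  cases μ; cases ν
  have : _ = _ := funext h
  simp only at this
  subst this
  rfl

theorem sum_eq_one (μ : Distr X) {s : Finset X} (h : Function.support μ.f ⊆ ↑s) :
    ∑ x ∈ s, μ.f x = 1 := by
  rw [← finsum_eq_finset_sum_of_support_subset _ h, μ.sum_one]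

theorem f_le_one (μ : Distr X) (x : X) : μ.f x ≤ 1 := by
  classical
  have hsub : Function.support μ.f ⊆ ↑(insert x μ.fin.toFinset) := by
    intro y hy
    simp only [Finset.coe_insert, Set.mem_insert_iff, Set.Finite.coe_toFinset]
    exact Or.inr hy
  have h1 := μ.sum_eq_one hsub
  have h2 := Finset.single_le_sum (f := μ.f) (fun i _ => μ.nonneg i)
    (Finset.mem_insert_self x μ.fin.toFinset)
  linarith

/-- Finite convex combination of distributions. -/
noncomputable def combo {ι : Type} [Fintype ι] (w : ι → ℝ) (ds : ι → Distr X)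
    (h0 : ∀ i, 0 ≤ w i) (h1 : ∑ i, w i = 1) : Distr X where
  f := fun x => ∑ i, w i * (ds i).f x
  nonneg := fun x => Finset.sum_nonneg fun i _ => mul_nonneg (h0 i) ((ds i).nonneg x)
  fin := by
    classical
    refine Set.Finite.subset (Set.finite_iUnion (fun i => (ds i).fin)) ?_
    intro x hx
    simp only [Function.mem_support] at hx
    by_contra hmem
    simp only [Set.mem_iUnion, Function.mem_support, not_exists, not_not] at hmem
    exact hx (Finset.sum_eq_zero fun i _ => by rw [hmem i, mul_zero])
  sum_one := by
    classical
    set s : Finset X := Finset.univ.biUnion (fun i => (ds i).fin.toFinset) with hs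
    have hsub : (Function.support fun x => ∑ i, w i * (ds i).f x) ⊆ ↑s := by
      intro x hx
      simp only [Function.mem_support] at hx
      by_contra hmem
      refine hx (Finset.sum_eq_zero fun i _ => ?_)
      have : (ds i).f x = 0 := by
        by_contra h'
        exact hmem (by
          simp only [hs, Finset.coe_biUnion, Set.mem_iUnion]
          exact ⟨i, Finset.mem_univ i, by simp [Set.Finite.mem_toFinset, h']⟩)
      rw [this, mul_zero]
    rw [finsum_eq_finset_sum_of_support_subset _ hsub, Finset.sum_comm]
    have : ∀ i, ∑ x ∈ s, w i * (ds i).f x = w i := by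
      intro i
      rw [← Finset.mul_sum, (ds i).sum_eq_one, mul_one]
      intro x hx
      simp only [hs, Finset.coe_biUnion, Set.mem_iUnion]
      exact ⟨i, Finset.mem_univ i, by simp [Set.Finite.mem_toFinset]; exact hx⟩
    rw [Finset.sum_congr rfl fun i _ => this i, h1]

@[simp] theorem combo_f {ι : Type} [Fintype ι] (w : ι → ℝ) (ds : ι → Distr X)
    (h0 : ∀ i, 0 ≤ w i) (h1 : ∑ i, w i = 1) (x : X) :
    (combo w ds h0 h1).f x = ∑ i, w i * (ds i).f x := rfl

@[simp] theorem dirac_f (E x : X) : (dirac E).f x = if x = E then 1 else 0 := rfl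

theorem eq_dirac_of_f_eq_one {μ : Distr X} {G : X} (h : μ.f G = 1) : μ = dirac G := by
  classical
  refine ext' fun x => ?_
  by_cases hx : x = G
  · simp [hx, h]
  · simp only [dirac_f, if_neg hx]
    by_contra h0
    have hpos : 0 < μ.f x := lt_of_le_of_ne (μ.nonneg x) (Ne.symm h0)
    set s : Finset X := μ.fin.toFinset ∪ {x, G} with hs
    have hsub : Function.support μ.f ⊆ ↑s := by
      intro y hy
      simp only [hs, Finset.coe_union, Set.mem_union, Set.Finite.coe_toFinset]
      exact Or.inl hy
    have h1 := μ.sum_eq_one hsub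
    have hsub2 : ({x, G} : Finset X) ⊆ s := Finset.subset_union_right
    have h2 : ∑ y ∈ ({x, G} : Finset X), μ.f y ≤ ∑ y ∈ s, μ.f y :=
      Finset.sum_le_sum_of_subset_of_nonneg hsub2 (fun i _ _ => μ.nonneg i)
    rw [Finset.sum_pair hx] at h2
    linarith

theorem eq_dirac_of_support_subset {μ : Distr X} {G : X}
    (h : ∀ x, x ≠ G → μ.f x = 0) : μ = dirac G := by
  classical
  have hsub : Function.support μ.f ⊆ ↑({G} : Finset X) := by
    intro y hy
    simp only [Finset.coe_singleton, Set.mem_singleton_iff]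
    by_contra hc
    exact hy (h y hc)
  have h1 := μ.sum_eq_one hsub
  simp only [Finset.sum_singleton] at h1
  exact eq_dirac_of_f_eq_one h1

end Distr

section ComboLemmas

variable {X : Type}

theorem IsCombo.f_eq {I : Type} [Fintype I] {p : I → ℝ} {μs : I → Distr X} {μ : Distr X}
    (h : IsCombo p μs μ) (x : X) : μ.f x = ∑ i, p i * (μs i).f x := h.2.2 x

theorem IsCombo.piece_zero {I : Type} [Fintype I] {p : I → ℝ} {μs : I → Distr X} {μ : Distr X}
    (h : IsCombo p μs μ) {i : I} (hi : p i ≠ 0) {x : X} (hx : μ.f x = 0) : (μs i).f x = 0 := by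
  have h0 : ∑ k, p k * (μs k).f x = 0 := by rw [← h.f_eq, hx]
  have := (Finset.sum_eq_zero_iff_of_nonneg
    (fun k _ => mul_nonneg (h.1 k) ((μs k).nonneg x))).1 h0 i (Finset.mem_univ i)
  rcases mul_eq_zero.1 this with h' | h'
  · exact absurd h' hi
  · exact h'

theorem isCombo_single (μ : Distr X) : IsCombo (fun _ : Unit => (1:ℝ)) (fun _ => μ) μ :=
  ⟨fun _ => zero_le_one, by simp, fun x => by simp⟩

theorem IsCombo.dirac_pieces {I : Type} [Fintype I] {p : I → ℝ} {μs : I → Distr X} {G : X}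
    (h : IsCombo p μs (Distr.dirac G)) {i : I} (hi : p i ≠ 0) : μs i = Distr.dirac G := by
  have hpi : 0 < p i := lt_of_le_of_ne (h.1 i) (Ne.symm hi)
  refine Distr.eq_dirac_of_f_eq_one ?_
  by_contra hne
  have hlt : p i * (μs i).f G < p i * 1 :=
    mul_lt_mul_of_pos_left (lt_of_le_of_ne ((μs i).f_le_one G) hne) hpi
  have hle : ∀ k ∈ Finset.univ, p k * (μs k).f G ≤ p k * 1 := fun k _ =>
    mul_le_mul_of_nonneg_left ((μs k).f_le_one G) (h.1 k)
  have hstrict := Finset.sum_lt_sum hle ⟨i, Finset.mem_univ i, hlt⟩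
  have h1 : ∑ k, p k * (μs k).f G = 1 := by
    rw [← h.f_eq]; simp
  simp only [mul_one] at hstrict
  rw [h1, h.2.1] at hstrict
  exact lt_irrefl _ hstrict

theorem IsCombo.dirac_states {I : Type} [Fintype I] {p : I → ℝ} {Es : I → X} {G : X}
    (h : IsCombo p (fun i => Distr.dirac (Es i)) (Distr.dirac G)) {i : I} (hi : p i ≠ 0) :
    Es i = G := by
  have := h.dirac_pieces hi
  have h2 := congrArg (fun ν => Distr.f ν (Es i)) this
  simp only [Distr.dirac_f, if_pos rfl] at h2
  by_contra hc
  rw [if_neg hc] at h2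
  exact one_ne_zero h2

theorem IsCombo.comp {I : Type} [Fintype I] {ι : I → Type} [∀ i, Fintype (ι i)]
    {p : I → ℝ} {q : ∀ i, ι i → ℝ} {μs : I → Distr X} {ms : ∀ i, ι i → Distr X} {μ : Distr X}
    (hp : IsCombo p μs μ) (hq : ∀ i, IsCombo (q i) (ms i) (μs i)) :
    IsCombo (fun ij : Σ i, ι i => p ij.1 * q ij.1 ij.2) (fun ij => ms ij.1 ij.2) μ := by
  classical
  refine ⟨fun ij => mul_nonneg (hp.1 ij.1) ((hq ij.1).1 ij.2), ?_, fun x => ?_⟩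
  · rw [← Finset.univ_sigma_univ, Finset.sum_sigma]
    have : ∀ i, ∑ j : ι i, p i * q i j = p i := fun i => by
      rw [← Finset.mul_sum, (hq i).2.1, mul_one]
    rw [Finset.sum_congr rfl fun i _ => this i, hp.2.1]
  · rw [← Finset.univ_sigma_univ, Finset.sum_sigma, hp.f_eq x]
    refine Finset.sum_congr rfl fun i _ => ?_
    rw [(hq i).f_eq x, Finset.mul_sum]
    exact Finset.sum_congr rfl fun j _ => by ring

end ComboLemmas

theorem dstep_of_pstep {E : PE Act} {α : Act} {μ : Distr (PE Act)} (h : pstep E α μ) :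
    dstep (Distr.dirac E) α μ :=
  ⟨Unit, inferInstance, fun _ => 1, fun _ => E, fun _ => μ, isCombo_single _,
    isCombo_single _, fun _ => h⟩

theorem IsCombo.restrict {X : Type} {I : Type} [Fintype I] {p : I → ℝ} {μs : I → Distr X}
    {μ : Distr X} (h : IsCombo p μs μ) :
    IsCombo (fun i : {i // p i ≠ 0} => p i.1) (fun i => μs i.1) μ := by
  classical
  have hsum : ∀ (g : I → ℝ),
      (∑ i : {i // p i ≠ 0}, p i.1 * g i.1) = ∑ i, p i * g i := by
    intro g
    rw [← Finset.sum_subtype (Finset.univ.filter (fun i => p i ≠ 0))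
      (by intro x; simp) (fun i => p i * g i)]
    refine Finset.sum_filter_of_ne fun i _ hne => ?_
    intro hp
    exact hne (by rw [hp, zero_mul])
  refine ⟨fun i => h.1 i.1, ?_, fun x => ?_⟩
  · have h1 := hsum fun _ => 1
    simp only [mul_one] at h1
    rw [h.2.1] at h1
    exact h1
  · rw [h.f_eq x]
    exact (hsum fun i => (μs i).f x).symm

theorem dstep_combo {I : Type} [Fintype I] {p : I → ℝ} {ρs obs : I → Distr (PE Act)}
    {ρ ob : Distr (PE Act)} {α : Act}
    (hρ : IsCombo p ρs ρ) (hob : IsCombo p obs ob)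
    (hstep : ∀ i, p i ≠ 0 → dstep (ρs i) α (obs i)) : dstep ρ α ob := by
  classical
  have h' : ∀ i : {i // p i ≠ 0},
      ∃ (J : Type) (_ : Fintype J) (q : J → ℝ)
      (Es : J → PE Act) (ms : J → Distr (PE Act)),
      IsCombo q (fun j => Distr.dirac (Es j)) (ρs i.1) ∧ IsCombo q ms (obs i.1) ∧
      ∀ j, pstep (Es j) α (ms j) :=
    fun i => hstep i.1 i.2
  choose J instJ q Es ms hc1 hc2 hst using h'
  letI : ∀ i, Fintype (J i) := instJ
  exact ⟨Σ i, J i, inferInstance, fun ij => p ij.1.1 * q ij.1 ij.2,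
    fun ij => Es ij.1 ij.2, fun ij => ms ij.1 ij.2,
    IsCombo.comp hρ.restrict hc1, IsCombo.comp hob.restrict hc2, fun ij => hst ij.1 ij.2⟩

/-- Residual distribution: peel off a `c`-scaled component from a distribution. -/
theorem Distr.residual {X : Type} (σ a : Distr X) (c : ℝ) (hc0 : 0 ≤ c) (g : X → ℝ)
    (hg : ∀ x, 0 ≤ g x) (hσ : ∀ x, σ.f x = c * a.f x + g x) :
    c ≤ 1 ∧ ∃ B : Distr X, ∀ x, g x = (1 - c) * B.f x := by
  classical
  set s : Finset X := σ.fin.toFinset ∪ a.fin.toFinset with hs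
  have hsubσ : Function.support σ.f ⊆ ↑s := by
    intro y hy
    simp only [hs, Finset.coe_union, Set.mem_union, Set.Finite.coe_toFinset]
    exact Or.inl hy
  have hsuba : Function.support a.f ⊆ ↑s := by
    intro y hy
    simp only [hs, Finset.coe_union, Set.mem_union, Set.Finite.coe_toFinset]
    exact Or.inr hy
  have h1 := σ.sum_eq_one hsubσ
  have h2 := a.sum_eq_one hsuba
  have hgsum : ∑ x ∈ s, g x = 1 - c := by
    have h3 : ∑ x ∈ s, σ.f x = ∑ x ∈ s, (c * a.f x + g x) :=
      Finset.sum_congr rfl fun x _ => hσ x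
    rw [Finset.sum_add_distrib, ← Finset.mul_sum, h2, mul_one] at h3
    rw [h1] at h3
    linarith
  have hc1 : c ≤ 1 := by
    have : 0 ≤ ∑ x ∈ s, g x := Finset.sum_nonneg fun x _ => hg x
    linarith
  refine ⟨hc1, ?_⟩
  have hgσ : ∀ x, σ.f x = 0 → g x = 0 := by
    intro x hx
    have h4 := hσ x
    rw [hx] at h4
    nlinarith [a.nonneg x, hg x]
  rcases eq_or_lt_of_le hc1 with hceq | hclt
  · refine ⟨a, fun x => ?_⟩
    rw [← hceq]
    simp only [sub_self, zero_mul]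
    by_cases hx : x ∈ s
    · have h0 : ∑ x ∈ s, g x = 0 := by rw [hgsum, ← hceq]; ring
      exact (Finset.sum_eq_zero_iff_of_nonneg fun x _ => hg x).1 h0 x hx
    · refine hgσ x ?_
      by_contra h'
      exact hx (hsubσ h')
  · have hgsupp : Function.support (fun x => g x / (1 - c)) ⊆ ↑s := by
      intro y hy
      simp only [Function.mem_support] at hy
      refine hsubσ ?_
      intro h0
      exact hy (by rw [hgσ y h0, zero_div])
    refine ⟨{ f := fun x => g x / (1 - c),
              nonneg := fun x => div_nonneg (hg x) (by linarith),
              fin := Set.Finite.subset s.finite_toSet hgsupp,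
              sum_one := ?_ }, fun x => ?_⟩
    · rw [finsum_eq_finset_sum_of_support_subset _ hgsupp, ← Finset.sum_div, hgsum]
      exact div_self (by linarith)
    · show g x = (1 - c) * (g x / (1 - c))
      rw [mul_comm, div_mul_cancel₀ _ (by linarith : (1:ℝ) - c ≠ 0)]

theorem ptau_parts {a a' σ σ' : Distr (PE Act)} {c : ℝ} (hc0 : 0 ≤ c)
    (hd : dstep a τ a') (g : PE Act → ℝ) (hg : ∀ x, 0 ≤ g x)
    (hσ : ∀ x, σ.f x = c * a.f x + g x) (hσ' : ∀ x, σ'.f x = c * a'.f x + g x) :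
    ptau τ σ σ' := by
  obtain ⟨hc1, B, hB⟩ := Distr.residual σ a c hc0 g hg hσ
  exact Or.inr ⟨c, a, B, a', hc0, hc1,
    fun x => by rw [hσ x, hB x], fun x => by rw [hσ' x, hB x], hd⟩

theorem ptau_refl (μ : Distr (PE Act)) : ptau τ μ μ := by
  refine ptau_parts τ (c := 0) le_rfl
    (dstep_of_pstep (pstep.pre τ (PP.dirac PE.zero))) μ.f μ.nonneg ?_ ?_ <;>
  · intro x
    rw [zero_mul, zero_add]

theorem wtau_refl (μ : Distr (PE Act)) : wtau τ μ μ := Relation.ReflTransGen.refl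

theorem ptau_norm {a a' : Distr (PE Act)} (h : ptau τ a a') :
    ∃ (s : ℝ) (a₁ a₁' b : Distr (PE Act)), 0 ≤ s ∧ s ≤ 1 ∧ dstep a₁ τ a₁' ∧
      (∀ x, a.f x = s * a₁.f x + (1 - s) * b.f x) ∧
      (∀ x, a'.f x = s * a₁'.f x + (1 - s) * b.f x) := by
  rcases h with hd | ⟨s, μ₁, μ₂, μ₁', hs0, hs1, hm, hm', hd⟩
  · exact ⟨1, a, a', a, zero_le_one, le_rfl, hd,
      fun x => by ring, fun x => by ring⟩
  · exact ⟨s, μ₁, μ₁', μ₂, hs0, hs1, hd, hm, hm'⟩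

theorem ptau_combo {I : Type} [Fintype I] {p : I → ℝ} {ρs obs : I → Distr (PE Act)}
    {ρ ob : Distr (PE Act)}
    (hρ : IsCombo p ρs ρ) (hob : IsCombo p obs ob)
    (hstep : ∀ i, p i ≠ 0 → ptau τ (ρs i) (obs i)) : ptau τ ρ ob := by
  classical
  have h' : ∀ i : {i // p i ≠ 0},
      ∃ (s : ℝ) (a₁ a₁' b : Distr (PE Act)), 0 ≤ s ∧ s ≤ 1 ∧ dstep a₁ τ a₁' ∧
      (∀ x, (ρs i.1).f x = s * a₁.f x + (1 - s) * b.f x) ∧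
      (∀ x, (obs i.1).f x = s * a₁'.f x + (1 - s) * b.f x) :=
    fun i => ptau_norm τ (hstep i.1 i.2)
  choose sc a₁ a₁' b hs0 hs1 hd heq heq' using h'
  have hρr := hρ.restrict
  have hobr := hob.restrict
  set t : ℝ := ∑ i : {i // p i ≠ 0}, p i.1 * sc i with ht
  have ht0 : 0 ≤ t :=
    Finset.sum_nonneg fun i _ => mul_nonneg (hρ.1 i.1) (hs0 i)
  by_cases htz : t = 0
  · -- all moving parts have weight zero; `ob = ρ`
    have hob_eq : ob = ρ := by
      refine Distr.ext' fun x => ?_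
      rw [hobr.f_eq x, hρr.f_eq x]
      refine Finset.sum_congr rfl fun i _ => ?_
      have hterm : p i.1 * sc i = 0 := by
        have := (Finset.sum_eq_zero_iff_of_nonneg
          (fun i _ => mul_nonneg (hρ.1 i.1) (hs0 i))).1 (ht ▸ htz) i (Finset.mem_univ i)
        exact this
      have hsc : sc i = 0 := by
        rcases mul_eq_zero.1 hterm with h | h
        · exact absurd h i.2
        · exact h
      rw [heq i x, heq' i x, hsc]
      ring
    rw [hob_eq]
    exact ptau_refl τ ρ
  · have htpos : 0 < t := lt_of_le_of_ne ht0 (Ne.symm htz)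
    have hw0 : ∀ i : {i // p i ≠ 0}, 0 ≤ p i.1 * sc i / t :=
      fun i => div_nonneg (mul_nonneg (hρ.1 i.1) (hs0 i)) ht0
    have hw1 : ∑ i : {i // p i ≠ 0}, p i.1 * sc i / t = 1 := by
      rw [← Finset.sum_div, ← ht, div_self htz]
    set A : Distr (PE Act) := Distr.combo _ a₁ hw0 hw1 with hA
    set A' : Distr (PE Act) := Distr.combo _ a₁' hw0 hw1 with hA'
    have hdA : dstep A τ A' :=
      dstep_combo ⟨hw0, hw1, fun x => rfl⟩ ⟨hw0, hw1, fun x => rfl⟩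
        (fun i _ => hd i)
    set g : PE Act → ℝ := fun x => ∑ i : {i // p i ≠ 0}, p i.1 * ((1 - sc i) * (b i).f x)
      with hg
    have hgnn : ∀ x, 0 ≤ g x := fun x => Finset.sum_nonneg fun i _ =>
      mul_nonneg (hρ.1 i.1) (mul_nonneg (by linarith [hs1 i]) ((b i).nonneg x))
    have hAf : ∀ x, t * A.f x = ∑ i : {i // p i ≠ 0}, p i.1 * (sc i * (a₁ i).f x) := by
      intro x
      rw [hA, Distr.combo_f, Finset.mul_sum]
      refine Finset.sum_congr rfl fun i _ => ?_
      field_simp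
    have hA'f : ∀ x, t * A'.f x = ∑ i : {i // p i ≠ 0}, p i.1 * (sc i * (a₁' i).f x) := by
      intro x
      rw [hA', Distr.combo_f, Finset.mul_sum]
      refine Finset.sum_congr rfl fun i _ => ?_
      field_simp
    refine ptau_parts τ ht0 hdA g hgnn (fun x => ?_) (fun x => ?_)
    · rw [hρr.f_eq x, hAf x, hg, ← Finset.sum_add_distrib]
      refine Finset.sum_congr rfl fun i _ => ?_
      rw [heq i x]
      ring
    · rw [hobr.f_eq x, hA'f x, hg, ← Finset.sum_add_distrib]
      refine Finset.sum_congr rfl fun i _ => ?_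
      rw [heq' i x]
      ring

theorem optStep_combo {I : Type} [Fintype I] {p : I → ℝ} {ρs obs : I → Distr (PE Act)}
    {ρ ob : Distr (PE Act)} {α : Act}
    (hρ : IsCombo p ρs ρ) (hob : IsCombo p obs ob)
    (hstep : ∀ i, p i ≠ 0 → optStep τ (ρs i) α (obs i)) : optStep τ ρ α ob := by
  by_cases hα : α = τ
  · subst hα
    refine Or.inr ⟨rfl, ptau_combo α hρ hob fun i hi => ?_⟩
    rcases hstep i hi with hd | ⟨_, hp⟩
    · exact Or.inl hd
    · exact hp
  · refine Or.inl (dstep_combo hρ hob fun i hi => ?_)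
    rcases hstep i hi with hd | ⟨h, _⟩
    · exact hd
    · exact absurd h hα

theorem ptau_ctx {a a' : Distr (PE Act)} (h : ptau τ a a') {c : ℝ} (hc : 0 ≤ c)
    {g : PE Act → ℝ} (hg : ∀ x, 0 ≤ g x) {σ σ' : Distr (PE Act)}
    (hσ : ∀ x, σ.f x = c * a.f x + g x) (hσ' : ∀ x, σ'.f x = c * a'.f x + g x) :
    ptau τ σ σ' := by
  obtain ⟨s, a₁, a₁', b, hs0, hs1, hd, heq, heq'⟩ := ptau_norm τ h
  refine ptau_parts τ (c := c * s) (mul_nonneg hc hs0) hd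
    (fun x => c * ((1 - s) * b.f x) + g x)
    (fun x => add_nonneg (mul_nonneg hc (mul_nonneg (by linarith) (b.nonneg x))) (hg x))
    (fun x => ?_) (fun x => ?_)
  · rw [hσ x, heq x]; ring
  · rw [hσ' x, heq' x]; ring

theorem wtau_ctx {a a' : Distr (PE Act)} (h : wtau τ a a') {c : ℝ} (hc : 0 ≤ c)
    {g : PE Act → ℝ} (hg : ∀ x, 0 ≤ g x) {σ σ' : Distr (PE Act)}
    (hσ : ∀ x, σ.f x = c * a.f x + g x) (hσ' : ∀ x, σ'.f x = c * a'.f x + g x) :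
    wtau τ σ σ' := by
  have h' : Relation.ReflTransGen (ptau τ) a a' := h
  clear h
  induction h' generalizing σ' with
  | refl =>
      have he : σ' = σ := Distr.ext' fun x => by rw [hσ x, hσ' x]
      rw [he]; exact wtau_refl τ σ
  | @tail b a'' hab hbc ih =>
      obtain ⟨hc1, B, hB⟩ := Distr.residual σ a c hc g hg hσ
      have hmid : ∀ x, (Distr.mix c hc hc1 b B).f x = c * b.f x + g x := fun x => by
        show c * b.f x + (1 - c) * B.f x = c * b.f x + g x
        rw [← hB x]
      exact Relation.ReflTransGen.tail (ih hmid) (ptau_ctx τ hbc hc hg hmid hσ')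

theorem wtau_combo {I : Type} [Fintype I] {p : I → ℝ} {νs ν's : I → Distr (PE Act)}
    {ν ν' : Distr (PE Act)} (hν : IsCombo p νs ν) (hν' : IsCombo p ν's ν')
    (hstep : ∀ i, wtau τ (νs i) (ν's i)) : wtau τ ν ν' := by
  classical
  set hyb : Finset I → Distr (PE Act) := fun s =>
    Distr.combo p (fun j => if j ∈ s then ν's j else νs j) hν.1 hν.2.1 with hhyb
  have main : ∀ s : Finset I, wtau τ ν (hyb s) := by
    intro s
    induction s using Finset.induction_on with
    | empty =>
        have he : hyb ∅ = ν := Distr.ext' fun x => by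
          rw [hhyb]
          show ∑ i, p i * _ = ν.f x
          rw [hν.f_eq x]
          simp
        rw [he]; exact wtau_refl τ ν
    | @insert i s his ih =>
        refine Relation.ReflTransGen.trans ih ?_
        set g : PE Act → ℝ := fun x =>
          ∑ j ∈ Finset.univ.erase i, p j * (if j ∈ s then ν's j else νs j).f x with hgdef
        have hgnn : ∀ x, 0 ≤ g x := fun x => Finset.sum_nonneg fun j _ =>
          mul_nonneg (hν.1 j) (Distr.nonneg _ x)
        have hsf : ∀ x, (hyb s).f x = p i * (νs i).f x + g x := by
          intro x
          show (∑ j, p j * (if j ∈ s then ν's j else νs j).f x) = _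
          rw [← Finset.add_sum_erase Finset.univ _ (Finset.mem_univ i), if_neg his]
        have hsf' : ∀ x, (hyb (insert i s)).f x = p i * (ν's i).f x + g x := by
          intro x
          show (∑ j, p j * (if j ∈ insert i s then ν's j else νs j).f x) = _
          rw [← Finset.add_sum_erase Finset.univ _ (Finset.mem_univ i),
            if_pos (Finset.mem_insert_self i s)]
          congr 1
          refine Finset.sum_congr rfl fun j hj => ?_
          have hji : j ≠ i := (Finset.mem_erase.1 hj).1
          by_cases hjs : j ∈ s
          · rw [if_pos hjs, if_pos (Finset.mem_insert_of_mem hjs)]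
          · rw [if_neg hjs, if_neg (by
              intro hmem
              rcases Finset.mem_insert.1 hmem with h | h
              · exact hji h
              · exact hjs h)]
        exact wtau_ctx τ (hstep i) (hν.1 i) hgnn hsf hsf'
  have he : hyb Finset.univ = ν' := Distr.ext' fun x => by
    rw [hhyb]
    show ∑ i, p i * _ = ν'.f x
    rw [hν'.f_eq x]
    simp
  have := main Finset.univ
  rwa [he] at this

theorem isBranchingBisim_eq :
    IsBranchingBisim τ (Eq : Distr (PE Act) → Distr (PE Act) → Prop) := by
  refine ⟨fun μ ν h => h.symm, ?_, ?_⟩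
  · intro I _ p μs μ ν h hc
    subst h
    exact ⟨μ, μs, wtau_refl τ μ, rfl, hc, fun i => rfl⟩
  · intro μ ν α μ' h hd
    subst h
    exact ⟨μ, μ', wtau_refl τ μ, Or.inl hd, rfl, rfl⟩

theorem bb_refl (μ : Distr (PE Act)) : bb τ μ μ := ⟨Eq, isBranchingBisim_eq τ, rfl⟩

theorem bb_of_eq {μ ν : Distr (PE Act)} (h : μ = ν) : bb τ μ ν := h ▸ bb_refl τ μ

theorem bb_symm {μ ν : Distr (PE Act)} (h : bb τ μ ν) : bb τ ν μ :=
  let ⟨R, hR, hm⟩ := h; ⟨R, hR, hR.1 hm⟩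

theorem bb_isBisim : IsBranchingBisim τ (bb τ) := by
  refine ⟨fun μ ν h => bb_symm τ h, ?_, ?_⟩
  · rintro I inst p μs μ ν ⟨R, hR, hm⟩ hc
    obtain ⟨ν', νs, h1, h2, h3, h4⟩ := hR.2.1 I inst p μs μ ν hm hc
    exact ⟨ν', νs, h1, ⟨R, hR, h2⟩, h3, fun i => ⟨R, hR, h4 i⟩⟩
  · rintro μ ν α μ' ⟨R, hR, hm⟩ hd
    obtain ⟨ν', ν'', h1, h2, h3, h4⟩ := hR.2.2 μ ν α μ' hm hd
    exact ⟨ν', ν'', h1, h2, ⟨R, hR, h3⟩, ⟨R, hR, h4⟩⟩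

/-- Shift an `r`-portion of probability from state `b` to state `a`. -/
def Shift (a b : PE Act) (μ ν : Distr (PE Act)) : Prop :=
  ∃ r : ℝ, 0 ≤ r ∧
    ∀ x, ν.f x = μ.f x + r * ((if x = a then 1 else 0) - (if x = b then 1 else 0))

theorem Shift.srefl {a b : PE Act} (μ : Distr (PE Act)) : Shift a b μ μ :=
  ⟨0, le_rfl, fun x => by ring⟩

theorem Shift.of_eq {a b : PE Act} {μ ν : Distr (PE Act)} (h : μ = ν) : Shift a b μ ν :=
  h ▸ Shift.srefl μ

theorem Shift.flip {a b : PE Act} {μ ν : Distr (PE Act)} (h : Shift a b μ ν) :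
    Shift b a ν μ := by
  obtain ⟨r, hr, heq⟩ := h
  exact ⟨r, hr, fun x => by rw [heq x]; ring⟩

/-- The base relation. -/
def S0 (E F : PE Act) (μ ν : Distr (PE Act)) : Prop :=
  bb τ μ ν ∨ Shift F (.plus E F) μ ν ∨ Shift (.plus E F) F μ ν

theorem S0.srefl {E F : PE Act} (μ : Distr (PE Act)) : S0 τ E F μ μ := Or.inl (bb_refl τ μ)

theorem S0.of_eq {E F : PE Act} {μ ν : Distr (PE Act)} (h : μ = ν) : S0 τ E F μ ν :=
  Or.inl (bb_of_eq τ h)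

theorem S0.symm {E F : PE Act} {μ ν : Distr (PE Act)} (h : S0 τ E F μ ν) : S0 τ E F ν μ := by
  rcases h with h | h | h
  · exact Or.inl (bb_symm τ h)
  · exact Or.inr (Or.inr h.flip)
  · exact Or.inr (Or.inl h.flip)

/-- Convex lifting of a relation. -/
def Lift (S : Distr (PE Act) → Distr (PE Act) → Prop) (μ ν : Distr (PE Act)) : Prop :=
  ∃ (I : Type) (_ : Fintype I) (p : I → ℝ) (μs νs : I → Distr (PE Act)),
    IsCombo p μs μ ∧ IsCombo p νs ν ∧ ∀ i, S (μs i) (νs i)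

theorem Lift.of_S {S : Distr (PE Act) → Distr (PE Act) → Prop} {μ ν : Distr (PE Act)}
    (h : S μ ν) : Lift S μ ν :=
  ⟨Unit, inferInstance, fun _ => 1, fun _ => μ, fun _ => ν,
    isCombo_single μ, isCombo_single ν, fun _ => h⟩

theorem Lift.symm {S : Distr (PE Act) → Distr (PE Act) → Prop}
    (hS : ∀ {μ ν}, S μ ν → S ν μ) {μ ν : Distr (PE Act)} (h : Lift S μ ν) : Lift S ν μ := by
  obtain ⟨I, inst, p, μs, νs, h1, h2, h3⟩ := h
  exact ⟨I, inst, p, νs, μs, h2, h1, fun i => hS (h3 i)⟩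

theorem Lift.idem {S : Distr (PE Act) → Distr (PE Act) → Prop} {μ ν : Distr (PE Act)}
    (h : Lift (Lift S) μ ν) : Lift S μ ν := by
  obtain ⟨I, inst, p, μs, νs, h1, h2, h3⟩ := h
  choose ιs insts qs mss nss hcm hcn hSS using h3
  letI : ∀ i, Fintype (ιs i) := insts
  exact ⟨Σ i, ιs i, inferInstance, fun ij => p ij.1 * qs ij.1 ij.2,
    fun ij => mss ij.1 ij.2, fun ij => nss ij.1 ij.2,
    IsCombo.comp h1 hcm, IsCombo.comp h2 hcn, fun ij => hSS ij.1 ij.2⟩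

theorem Lift.mono {S S' : Distr (PE Act) → Distr (PE Act) → Prop}
    (hS : ∀ {μ ν}, S μ ν → S' μ ν) {μ ν : Distr (PE Act)} (h : Lift S μ ν) :
    Lift S' μ ν := by
  obtain ⟨I, inst, p, μs, νs, h1, h2, h3⟩ := h
  exact ⟨I, inst, p, μs, νs, h1, h2, fun i => hS (h3 i)⟩

set_option maxHeartbeats 1000000 in
/-- Coupling: two convex decompositions of the same distribution have a common
refinement. -/
theorem coupling {X : Type} [Nonempty X] {I J : Type} [Fintype I] [Fintype J]
    {p : I → ℝ} {q : J → ℝ} {μs : I → Distr X} {ξs : J → Distr X} {μ : Distr X}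
    (hp : IsCombo p μs μ) (hq : IsCombo q ξs μ) :
    ∃ (w : I → J → ℝ) (ζ : I → J → Distr X),
      (∀ i j, 0 ≤ w i j) ∧
      (∀ i, ∑ j, w i j = p i) ∧
      (∀ j, ∑ i, w i j = q j) ∧
      (∀ i, p i ≠ 0 → IsCombo (fun j => w i j / p i) (fun j => ζ i j) (μs i)) ∧
      (∀ j, q j ≠ 0 → IsCombo (fun i => w i j / q j) (fun i => ζ i j) (ξs j)) ∧
      (∀ i j, w i j ≠ 0 → ∀ x, (ξs j).f x = 0 → (ζ i j).f x = 0) := by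
  classical
  set S : Finset X := μ.fin.toFinset with hS
  have hmemS : ∀ x, x ∈ S ↔ μ.f x ≠ 0 := by
    intro x
    rw [hS, Set.Finite.mem_toFinset]
    exact Iff.rfl
  set g : I → J → X → ℝ :=
    fun i j x => p i * (μs i).f x * (q j * (ξs j).f x) / μ.f x with hg
  have hgnn : ∀ i j x, 0 ≤ g i j x := fun i j x =>
    div_nonneg (mul_nonneg (mul_nonneg (hp.1 i) ((μs i).nonneg x))
      (mul_nonneg (hq.1 j) ((ξs j).nonneg x))) (μ.nonneg x)
  have hgz : ∀ i j x, μ.f x = 0 → g i j x = 0 := by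
    intro i j x hx
    rw [hg]
    simp only [hx, div_zero]
  have hrowg : ∀ i x, ∑ j, g i j x = p i * (μs i).f x := by
    intro i x
    by_cases hμx : μ.f x = 0
    · rw [Finset.sum_eq_zero fun j _ => hgz i j x hμx]
      by_cases hpi : p i = 0
      · rw [hpi, zero_mul]
      · rw [hp.piece_zero hpi hμx, mul_zero]
    · have : ∀ j, g i j x = p i * (μs i).f x * (q j * (ξs j).f x) / μ.f x := fun j => rfl
      rw [Finset.sum_congr rfl fun j _ => this j, ← Finset.sum_div, ← Finset.mul_sum,
        ← hq.f_eq x, mul_div_assoc, div_self hμx, mul_one]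
  have hcolg : ∀ j x, ∑ i, g i j x = q j * (ξs j).f x := by
    intro j x
    by_cases hμx : μ.f x = 0
    · rw [Finset.sum_eq_zero fun i _ => hgz i j x hμx]
      by_cases hqj : q j = 0
      · rw [hqj, zero_mul]
      · rw [hq.piece_zero hqj hμx, mul_zero]
    · have h1 : ∀ i, g i j x = (q j * (ξs j).f x) * (p i * (μs i).f x) / μ.f x := by
        intro i
        rw [hg]
        ring
      rw [Finset.sum_congr rfl fun i _ => h1 i, ← Finset.sum_div, ← Finset.mul_sum,
        ← hp.f_eq x, mul_div_assoc, div_self hμx, mul_one]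
  set w : I → J → ℝ := fun i j => ∑ x ∈ S, g i j x with hw
  have hwnn : ∀ i j, 0 ≤ w i j := fun i j => Finset.sum_nonneg fun x _ => hgnn i j x
  have hrow : ∀ i, ∑ j, w i j = p i := by
    intro i
    rw [Finset.sum_comm]
    rw [Finset.sum_congr rfl fun x _ => hrowg i x]
    by_cases hpi : p i = 0
    · rw [hpi]
      exact Finset.sum_eq_zero fun x _ => zero_mul _
    · rw [← Finset.mul_sum, (μs i).sum_eq_one, mul_one]
      intro x hx
      exact Finset.mem_coe.2 ((hmemS x).2 fun hμx => hx (hp.piece_zero hpi hμx))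
  have hcol : ∀ j, ∑ i, w i j = q j := by
    intro j
    rw [Finset.sum_comm]
    rw [Finset.sum_congr rfl fun x _ => hcolg j x]
    by_cases hqj : q j = 0
    · rw [hqj]
      exact Finset.sum_eq_zero fun x _ => zero_mul _
    · rw [← Finset.mul_sum, (ξs j).sum_eq_one, mul_one]
      intro x hx
      exact Finset.mem_coe.2 ((hmemS x).2 fun hμx => hx (hq.piece_zero hqj hμx))
  have hwgz : ∀ i j, w i j = 0 → ∀ x, g i j x = 0 := by
    intro i j hwij x
    by_cases hx : x ∈ S
    · exact (Finset.sum_eq_zero_iff_of_nonneg fun y _ => hgnn i j y).1 hwij x hx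
    · refine hgz i j x ?_
      by_contra h'
      exact hx ((hmemS x).2 h')
  have hζex : ∀ i j, ∃ ζij : Distr X, w i j ≠ 0 → ∀ x, ζij.f x = g i j x / w i j := by
    intro i j
    by_cases hwij : w i j = 0
    · exact ⟨Distr.dirac (Classical.arbitrary X), fun h => absurd hwij h⟩
    · have hsupp : (Function.support fun x => g i j x / w i j) ⊆ ↑S := by
        intro x hx
        simp only [Function.mem_support] at hx
        exact Finset.mem_coe.2 ((hmemS x).2 fun hμx =>
          hx (by rw [hgz i j x hμx, zero_div]))
      refine ⟨⟨fun x => g i j x / w i j,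
        fun x => div_nonneg (hgnn i j x) (hwnn i j),
        Set.Finite.subset S.finite_toSet hsupp, ?_⟩, fun _ x => rfl⟩
      rw [finsum_eq_finset_sum_of_support_subset _ hsupp, ← Finset.sum_div]
      exact div_self hwij
  choose ζ hζ using hζex
  have hkey : ∀ i j x, w i j * (ζ i j).f x = g i j x := by
    intro i j x
    by_cases hwij : w i j = 0
    · rw [hwij, zero_mul, hwgz i j hwij x]
    · rw [hζ i j hwij x, mul_div_cancel₀ _ hwij]
  refine ⟨w, ζ, hwnn, hrow, hcol, ?_, ?_, ?_⟩
  · intro i hpi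
    refine ⟨fun j => div_nonneg (hwnn i j) (hp.1 i), ?_, fun x => ?_⟩
    · rw [← Finset.sum_div, hrow i, div_self hpi]
    · have h1 : ∀ j, w i j / p i * (ζ i j).f x = g i j x / p i := by
        intro j
        rw [div_mul_eq_mul_div, hkey i j x]
      rw [Finset.sum_congr rfl fun j _ => h1 j, ← Finset.sum_div, hrowg i x]
      exact (mul_div_cancel_left₀ _ hpi).symm
  · intro j hqj
    refine ⟨fun i => div_nonneg (hwnn i j) (hq.1 j), ?_, fun x => ?_⟩
    · rw [← Finset.sum_div, hcol j, div_self hqj]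
    · have h1 : ∀ i, w i j / q j * (ζ i j).f x = g i j x / q j := by
        intro i
        rw [div_mul_eq_mul_div, hkey i j x]
      rw [Finset.sum_congr rfl fun i _ => h1 i, ← Finset.sum_div, hcolg j x]
      exact (mul_div_cancel_left₀ _ hqj).symm
  · intro i j hwij x hx
    rw [hζ i j hwij x, hg]
    simp only [hx, mul_zero, zero_div]

instance : Nonempty (PE Act) := ⟨PE.zero⟩

set_option maxHeartbeats 1000000 in
/-- A combined transition from a convex combination decomposes along the components. -/
theorem dstep_decomp {I : Type} [Fintype I] {p : I → ℝ} {μs : I → Distr (PE Act)}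
    {μ μ' : Distr (PE Act)} {α : Act} (hp : IsCombo p μs μ) (hd : dstep μ α μ') :
    ∃ μ's : I → Distr (PE Act), IsCombo p μ's μ' ∧
      ∀ i, p i ≠ 0 → dstep (μs i) α (μ's i) := by
  classical
  obtain ⟨J, instJ, q, Es, mt, hc1, hc2, hst⟩ := hd
  obtain ⟨w, ζ, hwnn, hrow, hcol, hrowC, hcolC, hsupp⟩ := coupling hp hc1
  have hζd : ∀ i j, w i j ≠ 0 → ζ i j = Distr.dirac (Es j) := by
    intro i j hwij
    refine Distr.eq_dirac_of_support_subset fun x hx => ?_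
    refine hsupp i j hwij x ?_
    simp only [Distr.dirac_f, if_neg hx]
  have hwz : ∀ i, p i = 0 → ∀ j, w i j = 0 := by
    intro i hpi j
    have h0 : ∑ j, w i j = 0 := by rw [hrow i, hpi]
    exact (Finset.sum_eq_zero_iff_of_nonneg fun j _ => hwnn i j).1 h0 j (Finset.mem_univ j)
  have hwsum : ∀ i, p i ≠ 0 → ∑ j, w i j / p i = 1 := by
    intro i hpi
    rw [← Finset.sum_div, hrow i, div_self hpi]
  set μ's : I → Distr (PE Act) := fun i =>
    if hpi : p i = 0 then μs i
    else Distr.combo (fun j => w i j / p i) mt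
      (fun j => div_nonneg (hwnn i j) (hp.1 i)) (hwsum i hpi) with hμ's
  have hstep : ∀ i, p i ≠ 0 → dstep (μs i) α (μ's i) := by
    intro i hpi
    refine ⟨J, instJ, fun j => w i j / p i, Es, mt, ?_, ?_, hst⟩
    · obtain ⟨hnn, hsum, hptw⟩ := hrowC i hpi
      refine ⟨hnn, hsum, fun x => ?_⟩
      rw [hptw x]
      refine Finset.sum_congr rfl fun j _ => ?_
      by_cases hwij : w i j = 0
      · simp only [hwij, zero_div, zero_mul]
      · simp only [hζd i j hwij]
    · show IsCombo _ _ (if hpi : p i = 0 then μs i else _)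
      rw [dif_neg hpi]
      exact ⟨fun j => div_nonneg (hwnn i j) (hp.1 i), hwsum i hpi, fun x => rfl⟩
  refine ⟨μ's, ⟨hp.1, hp.2.1, fun x => ?_⟩, hstep⟩
  have hterm : ∀ i, p i * (μ's i).f x = ∑ j, w i j * (mt j).f x := by
    intro i
    by_cases hpi : p i = 0
    · rw [hpi, zero_mul]
      exact (Finset.sum_eq_zero fun j _ => by rw [hwz i hpi j, zero_mul]).symm
    · have : (μ's i).f x = ∑ j, w i j / p i * (mt j).f x := by
        show (dite _ _ _ : Distr (PE Act)).f x = _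
        rw [dif_neg hpi]
        rfl
      rw [this, Finset.mul_sum]
      refine Finset.sum_congr rfl fun j _ => ?_
      rw [← mul_assoc, mul_div_cancel₀ _ hpi]
  rw [Finset.sum_congr rfl fun i _ => hterm i, Finset.sum_comm, hc2.f_eq x]
  refine Finset.sum_congr rfl fun j _ => ?_
  rw [← Finset.sum_mul, hcol j]

/-- Shift an `r`-portion of mass from `b` to `a` in a distribution. -/
noncomputable def Distr.shifted {X : Type} (μ : Distr X) (a b : X) (hab : a ≠ b) (r : ℝ)
    (h0 : 0 ≤ r) (hr : r ≤ μ.f b) : Distr X where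
  f := fun x => μ.f x + r * ((if x = a then 1 else 0) - (if x = b then 1 else 0))
  nonneg := by
    intro x
    show 0 ≤ μ.f x + r * ((if x = a then 1 else 0) - (if x = b then 1 else 0))
    by_cases hx : x = a
    · subst hx
      rw [if_pos rfl, if_neg hab]
      have := μ.nonneg x
      nlinarith
    · by_cases hx' : x = b
      · subst hx'
        rw [if_neg hx, if_pos rfl]
        have := μ.nonneg x
        nlinarith
      · rw [if_neg hx, if_neg hx']
        have := μ.nonneg x
        nlinarith
  fin := by
    classical
    refine Set.Finite.subset (μ.fin.union ((Set.finite_singleton b).insert a)) ?_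
    intro x hx
    simp only [Function.mem_support] at hx
    by_contra hmem
    simp only [Set.mem_union, Set.mem_insert_iff, Set.mem_singleton_iff, not_or,
      Function.mem_support, not_not] at hmem
    obtain ⟨h1, h2, h3⟩ := hmem
    rw [h1, if_neg h2, if_neg h3] at hx
    simp at hx
  sum_one := by
    classical
    have hg : (Function.support fun x =>
        r * ((if x = a then (1:ℝ) else 0) - (if x = b then 1 else 0))) ⊆
        ↑({a, b} : Finset X) := by
      intro x hx
      simp only [Function.mem_support] at hx
      simp only [Finset.coe_insert, Finset.coe_singleton, Set.mem_insert_iff,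
        Set.mem_singleton_iff]
      by_contra hmem
      push_neg at hmem
      rw [if_neg hmem.1, if_neg hmem.2] at hx
      simp at hx
    have hfin : (Function.support fun x =>
        r * ((if x = a then (1:ℝ) else 0) - (if x = b then 1 else 0))).Finite :=
      Set.Finite.subset ({a, b} : Finset X).finite_toSet hg
    rw [finsum_add_distrib μ.fin hfin, μ.sum_one,
      finsum_eq_finset_sum_of_support_subset _ hg, Finset.sum_pair hab]
    rw [if_pos rfl, if_neg hab, if_neg (Ne.symm hab), if_pos rfl]
    ring

@[simp] theorem Distr.shifted_f {X : Type} (μ : Distr X) (a b : X) (hab : a ≠ b) (r : ℝ)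
    (h0 : 0 ≤ r) (hr : r ≤ μ.f b) (x : X) :
    (μ.shifted a b hab r h0 hr).f x =
      μ.f x + r * ((if x = a then 1 else 0) - (if x = b then 1 else 0)) := rfl

theorem Shift.le {a b : PE Act} {μ ν : Distr (PE Act)} {r : ℝ} (hab : a ≠ b) (h0 : 0 ≤ r)
    (heq : ∀ x, ν.f x = μ.f x + r * ((if x = a then 1 else 0) - (if x = b then 1 else 0))) :
    r ≤ μ.f b := by
  have := heq b
  rw [if_neg (Ne.symm hab), if_pos rfl] at this
  have := ν.nonneg b
  nlinarith [ν.nonneg b, heq b]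

set_option maxHeartbeats 1000000 in
/-- `Shift` is (strongly) decomposable. -/
theorem Shift.decomp {a b : PE Act} (hab : a ≠ b) {μ ν : Distr (PE Act)}
    (h : Shift a b μ ν) {I : Type} [Fintype I] {p : I → ℝ} {μs : I → Distr (PE Act)}
    (hc : IsCombo p μs μ) :
    ∃ νs : I → Distr (PE Act), IsCombo p νs ν ∧ ∀ i, Shift a b (μs i) (νs i) := by
  classical
  obtain ⟨r, hr0, heq⟩ := h
  have hrM : r ≤ μ.f b := Shift.le hab hr0 heq
  set M : ℝ := μ.f b with hM
  set θ : ℝ := if M = 0 then 0 else r / M with hθ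
  have hθ0 : 0 ≤ θ := by
    rw [hθ]
    split
    · exact le_rfl
    · exact div_nonneg hr0 (μ.nonneg b)
  have hθ1 : θ ≤ 1 := by
    rw [hθ]
    split
    · exact zero_le_one
    · rename_i hM0
      rw [div_le_one (lt_of_le_of_ne (μ.nonneg b) (Ne.symm hM0))]
      exact hrM
  have hθM : θ * M = r := by
    rw [hθ]
    split
    · rename_i hM0
      have : r = 0 := le_antisymm (hM0 ▸ hrM) hr0
      rw [this, zero_mul]
    · rename_i hM0
      field_simp
  have hbound : ∀ i, θ * (μs i).f b ≤ (μs i).f b := by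
    intro i
    nlinarith [(μs i).nonneg b, hθ1, (μs i).nonneg b]
  refine ⟨fun i => (μs i).shifted a b hab (θ * (μs i).f b)
    (mul_nonneg hθ0 ((μs i).nonneg b)) (hbound i), ⟨hc.1, hc.2.1, fun x => ?_⟩,
    fun i => ⟨θ * (μs i).f b, mul_nonneg hθ0 ((μs i).nonneg b), fun x => rfl⟩⟩
  have hsum : ∑ i, p i * (θ * (μs i).f b) = r := by
    have : ∀ i, p i * (θ * (μs i).f b) = θ * (p i * (μs i).f b) := fun i => by ring
    rw [Finset.sum_congr rfl fun i _ => this i, ← Finset.mul_sum, ← hc.f_eq b, ← hM, hθM]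
  have hterm : ∀ i, p i * ((μs i).shifted a b hab (θ * (μs i).f b)
      (mul_nonneg hθ0 ((μs i).nonneg b)) (hbound i)).f x =
      p i * (μs i).f x + (p i * (θ * (μs i).f b)) *
        ((if x = a then 1 else 0) - (if x = b then 1 else 0)) := by
    intro i
    rw [Distr.shifted_f]
    ring
  rw [Finset.sum_congr rfl fun i _ => hterm i, Finset.sum_add_distrib, ← hc.f_eq x,
    ← Finset.sum_mul, hsum, heq x]

set_option maxHeartbeats 1000000 in
/-- Transfer property for `Shift`-pairs. -/
theorem shift_transfer {a b : PE Act} (hab : a ≠ b) {μ ν : Distr (PE Act)}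
    (h : Shift a b μ ν) {α : Act} {μ' : Distr (PE Act)} (hd : dstep μ α μ')
    (hmatch : ∀ m, pstep b α m → ∃ ob, optStep τ (Distr.dirac a) α ob ∧ bb τ m ob) :
    ∃ ν'' : Distr (PE Act), optStep τ ν α ν'' ∧ Lift (bb τ) μ' ν'' := by
  classical
  obtain ⟨r, hr0, heq⟩ := h
  obtain ⟨J, instJ, q, Es, mt, hc1, hc2, hst⟩ := hd
  by_cases hrz : r = 0
  · have hνμ : ν = μ := Distr.ext' fun x => by rw [heq x, hrz]; ring
    exact ⟨μ', by rw [hνμ]; exact Or.inl ⟨J, instJ, q, Es, mt, hc1, hc2, hst⟩,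
      Lift.of_S (bb_refl τ μ')⟩
  · have hrc : r ≤ μ.f b := Shift.le hab hr0 heq
    set c : ℝ := μ.f b with hcdef
    have hcpos : 0 < c := lt_of_lt_of_le (lt_of_le_of_ne hr0 (Ne.symm hrz)) hrc
    set θ : ℝ := r / c with hθ
    have hθ0 : 0 ≤ θ := div_nonneg hr0 hcpos.le
    have hθ1 : θ ≤ 1 := by rw [hθ, div_le_one hcpos]; exact hrc
    have hθc : θ * c = r := by rw [hθ]; field_simp
    have hdc : ∑ j, q j * (if b = Es j then (1:ℝ) else 0) = c := by
      rw [hcdef, hc1.f_eq b]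
      exact (Finset.sum_congr rfl fun j _ => rfl).symm
    set wK : J ⊕ J → ℝ := Sum.elim (fun j => q j * (1 - θ * (if b = Es j then 1 else 0)))
      (fun j => q j * (θ * (if b = Es j then 1 else 0))) with hwK
    have hwnn : ∀ k, 0 ≤ wK k := by
      intro k
      rcases k with j | j <;> simp only [hwK, Sum.elim_inl, Sum.elim_inr]
      · refine mul_nonneg (hc1.1 j) ?_
        split <;> nlinarith
      · refine mul_nonneg (hc1.1 j) (mul_nonneg hθ0 ?_)
        split <;> norm_num
    have hwsum : ∑ k, wK k = 1 := by
      rw [Fintype.sum_sum_type]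
      simp only [hwK, Sum.elim_inl, Sum.elim_inr]
      rw [← Finset.sum_add_distrib]
      have hcg : ∀ j ∈ Finset.univ, q j * (1 - θ * (if b = Es j then (1:ℝ) else 0))
          + q j * (θ * (if b = Es j then 1 else 0)) = q j := fun j _ => by ring
      rw [Finset.sum_congr rfl hcg]
      exact hc1.2.1
    have hobex : ∀ j, ∃ ob, (b = Es j → optStep τ (Distr.dirac a) α ob) ∧ bb τ (mt j) ob := by
      intro j
      by_cases hEb : b = Es j
      · obtain ⟨ob, h1, h2⟩ := hmatch (mt j) (by rw [hEb]; exact hst j)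
        exact ⟨ob, fun _ => h1, h2⟩
      · exact ⟨mt j, fun h' => absurd h' hEb, bb_refl τ (mt j)⟩
    choose obs hob1 hob2 using hobex
    set obK : J ⊕ J → Distr (PE Act) := Sum.elim mt obs with hobK
    set GK : J ⊕ J → PE Act := Sum.elim Es (fun _ => a) with hGK
    have hcombν : IsCombo wK (fun k => Distr.dirac (GK k)) ν := by
      refine ⟨hwnn, hwsum, fun x => ?_⟩
      rw [heq x, hc1.f_eq x, Fintype.sum_sum_type]
      simp only [hwK, hGK, Sum.elim_inl, Sum.elim_inr]
      have hsum1 : ∑ j, q j * (1 - θ * (if b = Es j then (1:ℝ) else 0))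
            * (Distr.dirac (Es j)).f x
          = (∑ j, q j * (Distr.dirac (Es j)).f x)
            - θ * ((if x = b then (1:ℝ) else 0) * ∑ j, q j * (if b = Es j then (1:ℝ) else 0)) := by
        rw [Finset.mul_sum, Finset.mul_sum, ← Finset.sum_sub_distrib]
        refine Finset.sum_congr rfl fun j _ => ?_
        by_cases hbE : b = Es j
        · by_cases hx : x = b
          · rw [Distr.dirac_f, if_pos (hx.trans hbE), if_pos hx, if_pos hbE]
            ring
          · rw [Distr.dirac_f, if_neg (fun h' : x = Es j => hx (h'.trans hbE.symm)),
              if_neg hx, if_pos hbE]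
            ring
        · rw [if_neg hbE]
          ring
      have hsum2 : ∑ j, q j * (θ * (if b = Es j then (1:ℝ) else 0)) * (Distr.dirac a).f x
          = θ * ((if x = a then (1:ℝ) else 0)
            * ∑ j, q j * (if b = Es j then (1:ℝ) else 0)) := by
        rw [Finset.mul_sum, Finset.mul_sum]
        refine Finset.sum_congr rfl fun j _ => ?_
        rw [Distr.dirac_f]
        ring
      rw [hsum1, hsum2, hdc, ← hθc]
      ring
    have hstepK : ∀ k, wK k ≠ 0 → optStep τ (Distr.dirac (GK k)) α (obK k) := by
      intro k hk
      rcases k with j | j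
      · exact Or.inl (dstep_of_pstep (hst j))
      · have hbE : b = Es j := by
          by_contra h'
          refine hk ?_
          simp only [hwK, Sum.elim_inr, if_neg h']
          ring
        exact hob1 j hbE
    refine ⟨Distr.combo wK obK hwnn hwsum,
      optStep_combo τ hcombν ⟨hwnn, hwsum, fun x => rfl⟩ hstepK, ?_⟩
    refine ⟨J ⊕ J, inferInstance, wK, Sum.elim mt mt, obK, ⟨hwnn, hwsum, fun x => ?_⟩,
      ⟨hwnn, hwsum, fun x => rfl⟩, fun k => ?_⟩
    · rw [hc2.f_eq x, Fintype.sum_sum_type]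
      simp only [hwK, Sum.elim_inl, Sum.elim_inr]
      rw [← Finset.sum_add_distrib]
      exact Finset.sum_congr rfl fun j _ => by ring
    · rcases k with j | j
      · exact bb_refl τ (mt j)
      · exact hob2 j

theorem ne_plus (E F : PE Act) : F ≠ PE.plus E F := by
  intro h
  have h1 : sizeOf F = sizeOf (PE.plus E F) := congrArg sizeOf h
  simp only [PE.plus.sizeOf_spec] at h1
  omega

set_option maxHeartbeats 2000000 in
/-- The convex lifting of the base relation is a branching bisimulation. -/
theorem lift_isBisim (E F : PE Act) (hne : F ≠ PE.plus E F)
    (hmatch : ∀ (α : Act) m, pstep (PE.plus E F) α m →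
      ∃ ob, optStep τ (Distr.dirac F) α ob ∧ bb τ m ob) :
    IsBranchingBisim τ (Lift (S0 τ E F)) := by
  classical
  refine ⟨fun μ ν h => Lift.symm (fun h' => S0.symm τ h') h, ?_, ?_⟩
  · -- weak decomposability
    intro I inst p μs μ ν hR hc
    obtain ⟨I0, inst0, p0, ms, ns, hm, hn, hS⟩ := hR
    obtain ⟨w, ζ, hwnn, hrow, hcol, hrowC, hcolC, hsupp⟩ := coupling hm hc
    have hrowdec : ∀ i : I0, ∃ (ν'i : Distr (PE Act)) (ηs : I → Distr (PE Act)),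
        wtau τ (ns i) ν'i ∧ S0 τ E F (ms i) ν'i ∧
        (p0 i ≠ 0 → IsCombo (fun j => w i j / p0 i) ηs ν'i) ∧
        ∀ j, S0 τ E F (ζ i j) (ηs j) := by
      intro i
      by_cases hpi : p0 i = 0
      · exact ⟨ns i, fun j => ζ i j, wtau_refl τ (ns i), hS i,
          fun h' => absurd hpi h', fun j => S0.srefl τ _⟩
      · rcases hS i with hbb | hsh | hsh
        · obtain ⟨ν', ηs, h1, h2, h3, h4⟩ := (bb_isBisim τ).2.1 I inst
            (fun j => w i j / p0 i) (fun j => ζ i j) (ms i) (ns i) hbb (hrowC i hpi)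
          exact ⟨ν', ηs, h1, Or.inl h2, fun _ => h3, fun j => Or.inl (h4 j)⟩
        · obtain ⟨ηs, h3, h4⟩ := Shift.decomp hne hsh (hrowC i hpi)
          exact ⟨ns i, ηs, wtau_refl τ _, Or.inr (Or.inl hsh), fun _ => h3,
            fun j => Or.inr (Or.inl (h4 j))⟩
        · obtain ⟨ηs, h3, h4⟩ := Shift.decomp (Ne.symm hne) hsh (hrowC i hpi)
          exact ⟨ns i, ηs, wtau_refl τ _, Or.inr (Or.inr hsh), fun _ => h3,
            fun j => Or.inr (Or.inr (h4 j))⟩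
    choose ν's ηss h1 h2 h3 h4 using hrowdec
    have hν'C : IsCombo p0 ν's (Distr.combo p0 ν's hm.1 hm.2.1) :=
      ⟨hm.1, hm.2.1, fun x => rfl⟩
    have hwz : ∀ i, p0 i = 0 → ∀ j, w i j = 0 := by
      intro i hpi j
      have h0 : ∑ j, w i j = 0 := by rw [hrow i, hpi]
      exact (Finset.sum_eq_zero_iff_of_nonneg fun j _ => hwnn i j).1 h0 j (Finset.mem_univ j)
    have hwzc : ∀ j, p j = 0 → ∀ i, w i j = 0 := by
      intro j hqj i
      have h0 : ∑ i, w i j = 0 := by rw [hcol j, hqj]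
      exact (Finset.sum_eq_zero_iff_of_nonneg fun i _ => hwnn i j).1 h0 i (Finset.mem_univ i)
    have hcolsum : ∀ j, p j ≠ 0 → ∑ i, w i j / p j = 1 := by
      intro j hqj
      rw [← Finset.sum_div, hcol j, div_self hqj]
    set νs' : I → Distr (PE Act) := fun j =>
      if hq : p j = 0 then μs j
      else Distr.combo (fun i => w i j / p j) (fun i => ηss i j)
        (fun i => div_nonneg (hwnn i j) (hc.1 j)) (hcolsum j hq) with hνs'
    refine ⟨Distr.combo p0 ν's hm.1 hm.2.1, νs',
      wtau_combo τ hn hν'C h1, ⟨I0, inst0, p0, ms, ν's, hm, hν'C, h2⟩,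
      ⟨hc.1, hc.2.1, fun x => ?_⟩, fun j => ?_⟩
    · have hterm : ∀ j, p j * (νs' j).f x = ∑ i, w i j * (ηss i j).f x := by
        intro j
        by_cases hqj : p j = 0
        · rw [hqj, zero_mul]
          exact (Finset.sum_eq_zero fun i _ => by rw [hwzc j hqj i, zero_mul]).symm
        · have hf : (νs' j).f x = ∑ i, w i j / p j * (ηss i j).f x := by
            rw [hνs']
            show (dite _ _ _ : Distr (PE Act)).f x = _
            rw [dif_neg hqj]
            rfl
          rw [hf, Finset.mul_sum]
          refine Finset.sum_congr rfl fun i _ => ?_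
          rw [← mul_assoc, mul_div_cancel₀ _ hqj]
      have hterm2 : ∀ i, ∑ j, w i j * (ηss i j).f x = p0 i * (ν's i).f x := by
        intro i
        by_cases hpi : p0 i = 0
        · rw [hpi, zero_mul]
          exact Finset.sum_eq_zero fun j _ => by rw [hwz i hpi j, zero_mul]
        · rw [(h3 i hpi).f_eq x, Finset.mul_sum]
          refine Finset.sum_congr rfl fun j _ => ?_
          rw [← mul_assoc, mul_div_cancel₀ _ hpi]
      rw [Finset.sum_congr rfl fun j _ => hterm j, Finset.sum_comm,
        Finset.sum_congr rfl fun i _ => hterm2 i]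
      rfl
    · by_cases hqj : p j = 0
      · have : νs' j = μs j := by rw [hνs']; exact dif_pos hqj
        rw [this]
        exact Lift.of_S (S0.srefl τ _)
      · have : νs' j = Distr.combo (fun i => w i j / p j) (fun i => ηss i j)
            (fun i => div_nonneg (hwnn i j) (hc.1 j)) (hcolsum j hqj) := by
          rw [hνs']; exact dif_neg hqj
        rw [this]
        exact ⟨I0, inst0, fun i => w i j / p j, fun i => ζ i j, fun i => ηss i j,
          hcolC j hqj, ⟨fun i => div_nonneg (hwnn i j) (hc.1 j), hcolsum j hqj,
            fun x => rfl⟩, fun i => h4 i j⟩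
  · -- transfer
    intro μ ν α μ' hR hd
    obtain ⟨I0, inst0, p0, ms, ns, hm, hn, hS⟩ := hR
    obtain ⟨m's, hm', hstep⟩ := dstep_decomp hm hd
    have hpiece : ∀ i : I0, ∃ ν'i ν''i, wtau τ (ns i) ν'i ∧
        (p0 i ≠ 0 → optStep τ ν'i α ν''i) ∧ S0 τ E F (ms i) ν'i ∧
        Lift (S0 τ E F) (m's i) ν''i := by
      intro i
      by_cases hpi : p0 i = 0
      · exact ⟨ns i, m's i, wtau_refl τ _, fun h' => absurd hpi h', hS i,
          Lift.of_S (S0.srefl τ _)⟩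
      · rcases hS i with hbb | hsh | hsh
        · obtain ⟨ν', ν'', hw1, ho, hb1, hb2⟩ := (bb_isBisim τ).2.2 (ms i) (ns i) α
            (m's i) hbb (hstep i hpi)
          exact ⟨ν', ν'', hw1, fun _ => ho, Or.inl hb1, Lift.of_S (Or.inl hb2)⟩
        · obtain ⟨ν'', ho, hl⟩ := shift_transfer τ hne hsh (hstep i hpi)
            (fun m hp => hmatch α m hp)
          exact ⟨ns i, ν'', wtau_refl τ _, fun _ => ho, Or.inr (Or.inl hsh),
            Lift.mono (fun hb => Or.inl hb) hl⟩
        · obtain ⟨ν'', ho, hl⟩ := shift_transfer τ (Ne.symm hne) hsh (hstep i hpi)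
            (fun m hp => ⟨m, Or.inl (dstep_of_pstep (pstep.right hp)), bb_refl τ m⟩)
          exact ⟨ns i, ν'', wtau_refl τ _, fun _ => ho, Or.inr (Or.inr hsh),
            Lift.mono (fun hb => Or.inl hb) hl⟩
    choose ν's ν''s hw1 ho hS1 hS2 using hpiece
    exact ⟨Distr.combo p0 ν's hm.1 hm.2.1, Distr.combo p0 ν''s hm.1 hm.2.1,
      wtau_combo τ hn ⟨hm.1, hm.2.1, fun x => rfl⟩ hw1,
      optStep_combo τ ⟨hm.1, hm.2.1, fun x => rfl⟩ ⟨hm.1, hm.2.1, fun x => rfl⟩ ho,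
      ⟨I0, inst0, p0, ms, ν's, hm, ⟨hm.1, hm.2.1, fun x => rfl⟩, hS1⟩,
      Lift.idem ⟨I0, inst0, p0, m's, ν''s, hm', ⟨hm.1, hm.2.1, fun x => rfl⟩, hS2⟩⟩

theorem dstep_dirac_pre {α' α : Act} {P : PP Act} {μ' : Distr (PE Act)}
    (hd : dstep (Distr.dirac (PE.pre α P)) α' μ') : α' = α ∧ μ' = den P := by
  classical
  obtain ⟨J, instJ, q, Es, mt, hc1, hc2, hst⟩ := hd
  have hex : ∃ j, q j ≠ 0 := by
    by_contra h'
    push_neg at h'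
    have h1 := hc1.2.1
    rw [Finset.sum_eq_zero fun j _ => h' j] at h1
    exact zero_ne_one h1
  obtain ⟨j0, hj0⟩ := hex
  have hEs : ∀ j, q j ≠ 0 → Es j = PE.pre α P := fun j hj => hc1.dirac_states hj
  have key : ∀ j, q j ≠ 0 → α' = α ∧ mt j = den P := by
    intro j hj
    have hs := hst j
    rw [hEs j hj] at hs
    generalize hgen : mt j = m at hs
    cases hs
    exact ⟨rfl, rfl⟩
  refine ⟨(key j0 hj0).1, Distr.ext' fun x => ?_⟩
  rw [hc2.f_eq x]
  have hterm : ∀ j, q j * (mt j).f x = q j * (den P).f x := by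
    intro j
    by_cases hj : q j = 0
    · rw [hj, zero_mul, zero_mul]
    · rw [(key j hj).2]
  rw [Finset.sum_congr rfl fun j _ => hterm j, ← Finset.sum_mul, hc1.2.1, one_mul]

set_option maxHeartbeats 2000000 in
theorem statement16' {Act : Type} (τ : Act) (E F : PE Act)
    (h : sq τ E (.dirac F)) :
    bb τ (Distr.dirac (.plus E F)) (Distr.dirac F) ∧
    ∀ (α : Act) (Q : PP Act) (r : ℝ) (h0 : 0 < r) (h1 : r < 1),
      rbb τ (Distr.dirac (.pre α (.pchoice (.dirac (.plus E F)) r h0 h1 Q)))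
            (Distr.dirac (.pre α (.pchoice (.dirac F) r h0 h1 Q))) := by
  classical
  have hne : F ≠ PE.plus E F := ne_plus E F
  have hmatch : ∀ (α : Act) m, pstep (PE.plus E F) α m →
      ∃ ob, optStep τ (Distr.dirac F) α ob ∧ bb τ m ob := by
    intro α m hp
    cases hp with
    | left h' => exact h α m h'
    | right h' => exact ⟨m, Or.inl (dstep_of_pstep h'), bb_refl τ m⟩
  have hbisim := lift_isBisim τ E F hne hmatch
  have hshift1 : Shift F (PE.plus E F) (Distr.dirac (PE.plus E F)) (Distr.dirac F) := by
    refine ⟨1, zero_le_one, fun x => ?_⟩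
    simp only [Distr.dirac_f]
    by_cases h1 : x = F
    · rw [if_pos h1, if_neg (show ¬x = PE.plus E F from fun hx => hne (h1 ▸ hx))]
      ring
    · by_cases h2 : x = PE.plus E F
      · rw [if_neg h1, if_pos h2]
        ring
      · rw [if_neg h1, if_neg h2]
        ring
  have hpart1 : bb τ (Distr.dirac (PE.plus E F)) (Distr.dirac F) :=
    ⟨Lift (S0 τ E F), hbisim, Lift.of_S (Or.inr (Or.inl hshift1))⟩
  refine ⟨hpart1, ?_⟩
  intro α Q r hr0 hr1
  set P : PP Act := PP.pchoice (PP.dirac (PE.plus E F)) r hr0 hr1 Q with hP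
  set P' : PP Act := PP.pchoice (PP.dirac F) r hr0 hr1 Q with hP'
  have hbbden : bb τ (den P) (den P') := by
    refine ⟨Lift (S0 τ E F), hbisim, Lift.of_S (Or.inr (Or.inl ⟨r, hr0.le, fun x => ?_⟩))⟩
    show r * (Distr.dirac F).f x + (1 - r) * (den Q).f x
        = (r * (Distr.dirac (PE.plus E F)).f x + (1 - r) * (den Q).f x)
          + r * ((if x = F then 1 else 0) - (if x = PE.plus E F then 1 else 0))
    simp only [Distr.dirac_f]
    by_cases h1 : x = F
    · rw [if_pos h1, if_neg (show ¬x = PE.plus E F from fun hx => hne (h1 ▸ hx))]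
      ring
    · by_cases h2 : x = PE.plus E F
      · rw [if_neg h1, if_pos h2]
        ring
      · rw [if_neg h1, if_neg h2]
        ring
  refine ⟨fun μ ν => μ = ν ∨ (μ = Distr.dirac (.pre α P) ∧ ν = Distr.dirac (.pre α P'))
      ∨ (μ = Distr.dirac (.pre α P') ∧ ν = Distr.dirac (.pre α P)), ⟨?_, ?_, ?_⟩,
    Or.inr (Or.inl ⟨rfl, rfl⟩)⟩
  · rintro μ ν (h' | ⟨h1, h2⟩ | ⟨h1, h2⟩)
    · exact Or.inl h'.symm
    · exact Or.inr (Or.inr ⟨h2, h1⟩)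
    · exact Or.inr (Or.inl ⟨h2, h1⟩)
  · intro I inst p μs μ ν hRμν hcombo
    have hgen : ∀ (A B : PP Act), μ = Distr.dirac (.pre α A) → ν = Distr.dirac (.pre α B) →
        ∃ νs : I → Distr (PE Act), IsCombo p νs ν ∧
          ∀ i, μs i = νs i ∨ (μs i = Distr.dirac (.pre α A) ∧ νs i = Distr.dirac (.pre α B)) := by
      intro A B hμ hν
      subst hμ
      refine ⟨fun i => if hpi : p i = 0 then μs i else Distr.dirac (.pre α B),
        ⟨hcombo.1, hcombo.2.1, fun x => ?_⟩, fun i => ?_⟩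
      · have hterm : ∀ i, p i * (if hpi : p i = 0 then μs i
            else Distr.dirac (.pre α B)).f x = p i * (Distr.dirac (.pre α B)).f x := by
          intro i
          by_cases hpi : p i = 0
          · rw [hpi, zero_mul, zero_mul]
          · rw [dif_neg hpi]
        rw [hν, Finset.sum_congr rfl fun i _ => hterm i, ← Finset.sum_mul,
          hcombo.2.1, one_mul]
      · by_cases hpi : p i = 0
        · simp only [dif_pos hpi]
          exact Or.inl trivial
        · simp only [dif_neg hpi]
          exact Or.inr ⟨hcombo.dirac_pieces hpi, trivial⟩
    rcases hRμν with h' | ⟨h1, h2⟩ | ⟨h1, h2⟩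
    · exact ⟨μs, h' ▸ hcombo, fun i => Or.inl rfl⟩
    · obtain ⟨νs, hcν, hpcs⟩ := hgen P P' h1 h2
      refine ⟨νs, hcν, fun i => ?_⟩
      rcases hpcs i with h' | ⟨ha, hb⟩
      · exact Or.inl h'
      · exact Or.inr (Or.inl ⟨ha, hb⟩)
    · obtain ⟨νs, hcν, hpcs⟩ := hgen P' P h1 h2
      refine ⟨νs, hcν, fun i => ?_⟩
      rcases hpcs i with h' | ⟨ha, hb⟩
      · exact Or.inl h'
      · exact Or.inr (Or.inr ⟨ha, hb⟩)
  · intro μ ν α' μ' hRμν hdstep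
    rcases hRμν with h' | ⟨h1, h2⟩ | ⟨h1, h2⟩
    · subst h'
      exact ⟨μ', hdstep, bb_refl τ μ'⟩
    · subst h1
      subst h2
      obtain ⟨hα, hμ'⟩ := dstep_dirac_pre hdstep
      subst hα
      subst hμ'
      exact ⟨den P', dstep_of_pstep (pstep.pre _ P'), hbbden⟩
    · subst h1
      subst h2
      obtain ⟨hα, hμ'⟩ := dstep_dirac_pre hdstep
      subst hα
      subst hμ'
      exact ⟨den P, dstep_of_pstep (pstep.pre _ P), bb_symm τ hbbden⟩


/-- Soundness of axiom G: if `E ⊑ ∂(F)` then `E + F ≈_b F`, and hence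
`α.(∂(E+F) ⊕_r Q) ≈_rb α.(∂(F) ⊕_r Q)`. -/
theorem statement16 {Act : Type} (τ : Act) (E F : PE Act)
    (h : sq τ E (.dirac F)) :
    bb τ (Distr.dirac (.plus E F)) (Distr.dirac F) ∧
    ∀ (α : Act) (Q : PP Act) (r : ℝ) (h0 : 0 < r) (h1 : r < 1),
      rbb τ (Distr.dirac (.pre α (.pchoice (.dirac (.plus E F)) r h0 h1 Q)))
            (Distr.dirac (.pre α (.pchoice (.dirac F) r h0 h1 Q))) := by
  exact statement16' τ E F h

end PBB
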